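/- The functions I₁ = x₃² − x₁x₂, I₂ = x₁(x₂−x₃)²/(x₁−x₂), and I₃ = x₂(x₃−x₁)²/(x₁−x₂) are first integrals of the gDH system ẋ₁ = x₁(x₁−x₂−x₃), ẋ₂ = x₂(x₂−x₁−x₃), ẋ₃ = −x₁x₂ (i.e., their derivatives along solutions vanish wherever x₁ ≠ x₂), and they satisfy I₁ = I₂ − I₃ identically. -/

import Mathlib

/-- `I₁ = x₃²−x₁x₂`, `I₂ = x₁(x₂−x₃)²/(x₁−x₂)`,
`I₃ = x₂(x₃−x₁)²/(x₁−x₂)` are first integrals of `gDH(1,1,0;0,0,0;1)`,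
and `I₁ = I₂ − I₃`. -/
theorem stmt_14 (x₁ x₂ x₃ : ℂ → ℂ) (τ : ℂ)
    (h₁ : HasDerivAt x₁ (x₁ τ * (x₁ τ - x₂ τ - x₃ τ)) τ)
    (h₂ : HasDerivAt x₂ (x₂ τ * (x₂ τ - x₁ τ - x₃ τ)) τ)
    (h₃ : HasDerivAt x₃ (-(x₁ τ * x₂ τ)) τ)
    (hne : x₁ τ ≠ x₂ τ) :
    HasDerivAt (fun s => (x₃ s) ^ 2 - x₁ s * x₂ s) 0 τ ∧
    HasDerivAt (fun s => x₁ s * (x₂ s - x₃ s) ^ 2 / (x₁ s - x₂ s)) 0 τ ∧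
    HasDerivAt (fun s => x₂ s * (x₃ s - x₁ s) ^ 2 / (x₁ s - x₂ s)) 0 τ ∧
    (∀ u₁ u₂ u₃ : ℂ, u₁ ≠ u₂ →
      u₃ ^ 2 - u₁ * u₂
        = u₁ * (u₂ - u₃) ^ 2 / (u₁ - u₂) - u₂ * (u₃ - u₁) ^ 2 / (u₁ - u₂)) := by
  have hd : x₁ τ - x₂ τ ≠ 0 := sub_ne_zero.mpr hne
  refine ⟨?_, ?_, ?_, ?_⟩
  · have := (h₃.fun_pow 2).fun_sub (h₁.fun_mul h₂)
    refine this.congr_deriv ?_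
    ring
  · have := ((h₁.fun_mul ((h₂.fun_sub h₃).fun_pow 2)).fun_div (h₁.fun_sub h₂) hd)
    refine this.congr_deriv ?_
    field_simp
    ring
  · have := ((h₂.fun_mul ((h₃.fun_sub h₁).fun_pow 2)).fun_div (h₁.fun_sub h₂) hd)
    refine this.congr_deriv ?_
    field_simp
    ring
  · intro u₁ u₂ u₃ h
    have hd' : u₁ - u₂ ≠ 0 := sub_ne_zero.mpr h
    field_simp
    ring
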